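/- Let n ≥ 1 and let f be an isometric equivalence (a distance-preserving bijection) of the Euclidean space ℝⁿ onto itself. If f has finite order, i.e. f^k is the identity for some integer k ≥ 1, then f has a fixed point. -/
import Mathlib

/-- Every finite-order isometric equivalence (distance-preserving bijection) of the
Euclidean space `ℝⁿ` (`n ≥ 1`) has a fixed point. -/
theorem finite_order_isometry_has_fixed_point
    (n : ℕ) (hn : 1 ≤ n)
    (f : Equiv.Perm (EuclideanSpace ℝ (Fin n)))
    (hf : ∀ x y : EuclideanSpace ℝ (Fin n), dist (f x) (f y) = dist x y)
    (h : ∃ k : ℕ, 1 ≤ k ∧ f ^ k = 1) :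
    ∃ x : EuclideanSpace ℝ (Fin n), f x = x := by
  obtain ⟨k, hk, hfk⟩ := h
  -- `f` as an isometry equivalence
  let E := EuclideanSpace ℝ (Fin n)
  let g : EuclideanSpace ℝ (Fin n) ≃ᵢ EuclideanSpace ℝ (Fin n) := ⟨f, Isometry.of_dist_eq hf⟩
  -- Mazur-Ulam: linear part
  let L := g.toRealLinearIsometryEquiv
  have hL : ∀ x, (L : E → E) x = f x - f 0 := fun x =>
    g.toRealLinearIsometryEquiv_apply x
  have hpow : ∀ i : ℕ, (f ^ (i + 1)) 0 = f ((f ^ i) 0) := by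
    intro i
    rw [pow_succ']
    rfl
  -- the barycenter
  set c : E := (k : ℝ)⁻¹ • ∑ i ∈ Finset.range k, (f ^ i) 0 with hc
  have hk0 : (k : ℝ) ≠ 0 := by positivity
  have hshift : ∑ i ∈ Finset.range k, (f ^ (i + 1)) 0 = ∑ i ∈ Finset.range k, (f ^ i) 0 := by
    have h1 := Finset.sum_range_succ' (fun i => (f ^ i) 0) k
    have h2 := Finset.sum_range_succ (fun i => (f ^ i) 0) k
    simp only [pow_zero, Equiv.Perm.coe_one, id_eq, add_zero, hfk] at h1 h2
    rw [h1] at h2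
    exact h2
  refine ⟨c, ?_⟩
  have key : f c - f 0 = (L : E → E) c := (hL c).symm
  have hLc : (L : E → E) c = c - f 0 := by
    rw [hc, map_smul, map_sum]
    have : ∀ i ∈ Finset.range k, (L : E → E) ((f ^ i) 0) = (f ^ (i + 1)) 0 - f 0 := by
      intro i _
      rw [hL, hpow]
    rw [Finset.sum_congr rfl this, Finset.sum_sub_distrib, hshift, smul_sub,
      Finset.sum_const, Finset.card_range, ← Nat.cast_smul_eq_nsmul ℝ, smul_smul,
      inv_mul_cancel₀ hk0, one_smul]
  have := key.trans hLc
  linear_combination (norm := abel) this
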